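/- Let r ∈ ℕ, q ≥ 1, let c : ℕ → ZMod r be a finitely supported family of coefficients, and define f : ℤ → ZMod r by f(x) := Σ_δ c(δ)·binom(x,δ). Then the following are equivalent: (i) f is q-periodic, i.e. f(x+q) = f(x) for all x ∈ ℤ; (ii) for every δ ∈ ℕ, Σ_{j=1}^{q} C(q,j)·c(δ+j) = 0 in ZMod r, where C(q,j) is the usual binomial coefficient cast into ZMod r. -/

import Mathlib

/-- The integer binomial coefficient `binom(x,δ) = x(x-1)⋯(x-δ+1)/δ!`. -/
noncomputable def ibinom (x : ℤ) (δ : ℕ) : ℤ := Ring.choose x δ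

/-- A polyfract `f(x) = Σ_δ c(δ)·binom(x,δ)` over `ZMod r` is `q`-periodic iff
`Σ_{j=1}^{q} C(q,j)·c(δ+j) = 0` for every `δ ∈ ℕ`. -/
theorem stmt_13 (r : ℕ) (q : ℕ) (hq : 1 ≤ q) (c : ℕ →₀ ZMod r)
    (f : ℤ → ZMod r)
    (hf : ∀ x : ℤ, f x = c.sum fun δ a => ((ibinom x δ : ℤ) : ZMod r) * a) :
    (∀ x : ℤ, f (x + q) = f x) ↔
      (∀ δ : ℕ, ∑ j ∈ Finset.Icc 1 q, ((q.choose j : ℕ) : ZMod r) * c (δ + j) = 0) := by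
  classical
  set N : ℕ := (c.support.sup id) + 1 with hN
  have hcN : ∀ δ, N ≤ δ → c δ = 0 := by
    intro δ hδ
    by_contra h
    have := Finset.le_sup (f := id) (Finsupp.mem_support_iff.mpr h)
    simp only [id] at this
    omega
  set M : ℕ := N + q + 1 with hM
  have hcM : ∀ δ, M ≤ δ → c δ = 0 := fun δ h => hcN δ (by omega)
  set d : ℕ → ZMod r := fun i => ∑ j ∈ Finset.Icc 1 q, ((q.choose j : ℕ) : ZMod r) * c (i + j)
    with hd
  -- f as a sum over `range M`
  have hf' : ∀ x : ℤ, f x = ∑ δ ∈ Finset.range M, ((ibinom x δ : ℤ) : ZMod r) * c δ := by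
    intro x
    rw [hf]
    apply Finsupp.sum_of_support_subset
    · intro δ hδ
      simp only [Finset.mem_range]
      by_contra h
      exact Finsupp.mem_support_iff.mp hδ (hcM δ (by omega))
    · intro i _
      rw [mul_zero]
  -- key identity
  have key : ∀ x : ℤ, f (x + q) =
      f x + ∑ i ∈ Finset.range M, ((ibinom x i : ℤ) : ZMod r) * d i := by
    intro x
    set g : ℕ × ℕ → ZMod r := fun p =>
      ((Ring.choose x p.1 : ℤ) : ZMod r) * ((q.choose p.2 : ℕ) : ZMod r) * c (p.1 + p.2) with hg
    have step1 : f (x + q) =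
        ∑ δ ∈ Finset.range M, ∑ p ∈ Finset.HasAntidiagonal.antidiagonal δ, g p := by
      rw [hf']
      refine Finset.sum_congr rfl fun δ hδ => ?_
      have hvand : (ibinom (x + q) δ : ℤ) =
          ∑ p ∈ Finset.HasAntidiagonal.antidiagonal δ, Ring.choose x p.1 * (q.choose p.2 : ℤ) := by
        unfold ibinom
        rw [Ring.add_choose_eq δ (Commute.all _ _)]
        refine Finset.sum_congr rfl fun p hp => ?_
        rw [Ring.choose_natCast]
      rw [hvand]
      push_cast
      rw [Finset.sum_mul]
      refine Finset.sum_congr rfl fun p hp => ?_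
      rw [Finset.HasAntidiagonal.mem_antidiagonal] at hp
      simp only [hg, hp]
    have hdisj : (↑(Finset.range M) : Set ℕ).PairwiseDisjoint Finset.HasAntidiagonal.antidiagonal := by
      intro a _ b _ hab
      simp only [Function.onFun, Finset.disjoint_left]
      intro p hpa hpb
      rw [Finset.HasAntidiagonal.mem_antidiagonal] at hpa hpb
      exact hab (hpa ▸ hpb)
    have step2 : ∑ δ ∈ Finset.range M, ∑ p ∈ Finset.HasAntidiagonal.antidiagonal δ, g p =
        ∑ p ∈ (Finset.range M).biUnion Finset.HasAntidiagonal.antidiagonal, g p :=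
      (Finset.sum_biUnion hdisj).symm
    have step3 : ∑ p ∈ (Finset.range M).biUnion Finset.HasAntidiagonal.antidiagonal, g p =
        ∑ p ∈ Finset.range M ×ˢ Finset.range M, g p := by
      apply Finset.sum_subset
      · intro p hp
        simp only [Finset.mem_biUnion, Finset.mem_range, Finset.HasAntidiagonal.mem_antidiagonal] at hp
        obtain ⟨a, ha, hpa⟩ := hp
        simp only [Finset.mem_product, Finset.mem_range]
        omega
      · intro p hp hnp
        simp only [Finset.mem_product, Finset.mem_range] at hp
        simp only [Finset.mem_biUnion, Finset.mem_range, Finset.HasAntidiagonal.mem_antidiagonal] at hnp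
        have : M ≤ p.1 + p.2 := by
          by_contra h
          exact hnp ⟨p.1 + p.2, by omega, rfl⟩
        rw [hg]
        simp only
        rw [hcM _ this, mul_zero]
    have step4 : ∑ p ∈ Finset.range M ×ˢ Finset.range M, g p =
        ∑ i ∈ Finset.range M, ((ibinom x i : ℤ) : ZMod r) * (c i + d i) := by
      rw [Finset.sum_product]
      refine Finset.sum_congr rfl fun i hi => ?_
      have inner : ∑ j ∈ Finset.range M, g (i, j) =
          ((ibinom x i : ℤ) : ZMod r) *
            ∑ j ∈ Finset.range M, ((q.choose j : ℕ) : ZMod r) * c (i + j) := by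
        rw [Finset.mul_sum]
        refine Finset.sum_congr rfl fun j hj => ?_
        rw [hg]
        simp only [ibinom]
        ring
      rw [inner]
      congr 1
      have htr : ∑ j ∈ Finset.range M, ((q.choose j : ℕ) : ZMod r) * c (i + j) =
          ∑ j ∈ Finset.range (q + 1), ((q.choose j : ℕ) : ZMod r) * c (i + j) := by
        symm
        apply Finset.sum_subset
        · intro j hj
          simp only [Finset.mem_range] at hj ⊢
          omega
        · intro j hj hnj
          simp only [Finset.mem_range] at hj hnj
          rw [Nat.choose_eq_zero_of_lt (by omega)]
          simp
      rw [htr]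
      have hins : Finset.range (q + 1) = insert 0 (Finset.Icc 1 q) := by
        ext j
        simp only [Finset.mem_range, Finset.mem_insert, Finset.mem_Icc]
        omega
      rw [hins, Finset.sum_insert (by simp), hd]
      simp
    rw [step1, step2, step3, step4, hf' x]
    simp only [mul_add, Finset.sum_add_distrib]
  constructor
  · -- forward direction
    intro hper δ
    have hzero : ∀ x : ℤ, ∑ i ∈ Finset.range M, ((ibinom x i : ℤ) : ZMod r) * d i = 0 := by
      intro x
      have := key x
      rw [hper x] at this
      exact (add_eq_left.mp this.symm)
    have hdz : ∀ n : ℕ, d n = 0 := by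
      intro n
      induction n using Nat.strong_induction_on with
      | _ n ih =>
        by_cases hn : n < M
        · have h := hzero (n : ℤ)
          have heq : ∑ i ∈ Finset.range M, ((ibinom (n : ℤ) i : ℤ) : ZMod r) * d i = d n := by
            rw [Finset.sum_eq_single_of_mem n (Finset.mem_range.mpr hn)]
            · simp only [ibinom, Ring.choose_natCast]
              push_cast
              rw [Nat.choose_self]
              simp
            · intro i hi hine
              rcases lt_or_gt_of_ne hine with h1 | h1
              · rw [ih i h1, mul_zero]
              · simp only [ibinom, Ring.choose_natCast]
                rw [Nat.choose_eq_zero_of_lt h1]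
                simp
          rw [heq] at h
          exact h
        · rw [hd]
          apply Finset.sum_eq_zero
          intro j hj
          rw [Finset.mem_Icc] at hj
          rw [hcM (n + j) (by omega), mul_zero]
    exact hdz δ
  · -- reverse direction
    intro hcoef x
    rw [key x]
    have : ∀ i, d i = 0 := fun i => hcoef i
    simp [this]
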